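/- Let n ≥ 1 and β > 0. Let ρ : ℝⁿ → (0,∞) be twice continuously differentiable, b : ℝⁿ → ℝⁿ continuously differentiable, A : ℝⁿ → ℝ^{n×n} continuously differentiable, and k : ℝⁿ × ℝⁿ → [0,∞) measurable such that for every x the functions y ↦ k(y,x)ρ(y) and y ↦ k(x,y) are integrable on ℝⁿ. Define the time-reversed drift b^R(x) := −b(x) + 2β⁻¹A(x)∇log ρ(x) and the time-reversed jump kernel k^R(x,y) := ρ(y)k(y,x)/ρ(x). Then for every x ∈ ℝⁿ, ∇·(−b^R ρ + β⁻¹A∇ρ)(x) + ∫_{ℝⁿ}(k^R(y,x)ρ(y) − k^R(x,y)ρ(x)) dy = −[∇·(−bρ + β⁻¹A∇ρ)(x) + ∫_{ℝⁿ}(k(y,x)ρ(y) − k(x,y)ρ(x)) dy]. -/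

import Mathlib

open MeasureTheory Matrix

/-- The gradient of a scalar function on `ℝⁿ`, given by the partial derivatives. -/
noncomputable def grad {n : ℕ} (f : (Fin n → ℝ) → ℝ) (x : Fin n → ℝ) : Fin n → ℝ :=
  fun i => fderiv ℝ f x (Pi.single i 1)

/-- The divergence of a vector field on `ℝⁿ`. -/
noncomputable def dive {n : ℕ} (v : (Fin n → ℝ) → (Fin n → ℝ)) (x : Fin n → ℝ) : ℝ :=
  ∑ i, fderiv ℝ (fun y => v y i) x (Pi.single i 1)

theorem stmt_13 (n : ℕ) (hn : 1 ≤ n) (β : ℝ) (hβ : 0 < β)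
    (ρ : (Fin n → ℝ) → ℝ) (hρ : ContDiff ℝ 2 ρ) (hρpos : ∀ x, 0 < ρ x)
    (b : (Fin n → ℝ) → (Fin n → ℝ)) (hb : ContDiff ℝ 1 b)
    (A : (Fin n → ℝ) → Matrix (Fin n) (Fin n) ℝ)
    (hA : ∀ i j, ContDiff ℝ 1 fun x => A x i j)
    (k : (Fin n → ℝ) → (Fin n → ℝ) → ℝ)
    (hkmeas : Measurable fun p : (Fin n → ℝ) × (Fin n → ℝ) => k p.1 p.2)
    (hknonneg : ∀ x y, 0 ≤ k x y)
    (hkint1 : ∀ x, Integrable fun y => k y x * ρ y)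
    (hkint2 : ∀ x, Integrable fun y => k x y)
    (bR : (Fin n → ℝ) → (Fin n → ℝ))
    (hbR : ∀ x, bR x = -b x + (2 * β⁻¹) • ((A x) *ᵥ grad (fun y => Real.log (ρ y)) x))
    (kR : (Fin n → ℝ) → (Fin n → ℝ) → ℝ)
    (hkR : ∀ x y, kR x y = ρ y * k y x / ρ x) :
    ∀ x, dive (fun y => -(ρ y • bR y) + β⁻¹ • ((A y) *ᵥ grad ρ y)) x +
        (∫ y, (kR y x * ρ y - kR x y * ρ x)) =
      -(dive (fun y => -(ρ y • b y) + β⁻¹ • ((A y) *ᵥ grad ρ y)) x +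
        ∫ y, (k y x * ρ y - k x y * ρ x)) := by

  intro x
  have hdiff : Differentiable ℝ ρ := hρ.differentiable (by norm_num)
  have hlog : ∀ y, grad (fun z => Real.log (ρ z)) y = (ρ y)⁻¹ • grad ρ y := by
    intro y
    funext i
    have h := ((hdiff y).hasFDerivAt.log (ne_of_gt (hρpos y)))
    simp [grad, h.fderiv]
  have hvec : (fun y => -(ρ y • bR y) + β⁻¹ • ((A y) *ᵥ grad ρ y)) =
      (fun y => -(-(ρ y • b y) + β⁻¹ • ((A y) *ᵥ grad ρ y))) := by
    funext y
    rw [hbR, hlog, Matrix.mulVec_smul]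
    have hρne : ρ y ≠ 0 := ne_of_gt (hρpos y)
    have h2 : ρ y • ((2 * β⁻¹) • ((ρ y)⁻¹ • ((A y) *ᵥ grad ρ y))) =
        (2 * β⁻¹) • ((A y) *ᵥ grad ρ y) := by
      rw [smul_smul, smul_smul]
      congr 1
      field_simp
    rw [smul_add, h2]
    module
  rw [hvec]
  have hdive : dive (fun y => -(-(ρ y • b y) + β⁻¹ • ((A y) *ᵥ grad ρ y))) x =
      -dive (fun y => -(ρ y • b y) + β⁻¹ • ((A y) *ᵥ grad ρ y)) x := by
    simp only [dive, ← Finset.sum_neg_distrib]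
    refine Finset.sum_congr rfl fun i _ => ?_
    have : (fun y => (-(-(ρ y • b y) + β⁻¹ • ((A y) *ᵥ grad ρ y))) i) =
        fun y => -((-(ρ y • b y) + β⁻¹ • ((A y) *ᵥ grad ρ y)) i) := by
      funext y; simp
    rw [this, fderiv_fun_neg]
    simp
  rw [hdive]
  have hint : (∫ y, (kR y x * ρ y - kR x y * ρ x)) =
      -∫ y, (k y x * ρ y - k x y * ρ x) := by
    rw [← integral_neg]
    refine integral_congr_ae (Filter.Eventually.of_forall fun y => ?_)
    simp only [hkR]
    have h1 : ρ y ≠ 0 := ne_of_gt (hρpos y)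
    have h2 : ρ x ≠ 0 := ne_of_gt (hρpos x)
    field_simp
    ring
  rw [hint]
  ring
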